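/- If G is a graph on n vertices with maximum degree Δ, then for every positive integer k, G contains an induced subgraph H' on at least n − k·√Δ vertices such that the difference between the maximum degree of H' and the k-th largest degree in H' is at most √Δ. -/

import Mathlib

open Finset

variable {V : Type*} [Fintype V] [DecidableEq V]

/-- The degree of `v` in the subgraph of `G` induced on the vertex set `s`:
the number of neighbours of `v` lying in `s`. -/
def degIn (G : SimpleGraph V) [DecidableRel G.Adj] (s : Finset V) (v : V) : ℕ :=
  (s.filter fun u => G.Adj v u).card

/-- The maximum degree of the subgraph of `G` induced on `s`. -/
def maxDegIn (G : SimpleGraph V) [DecidableRel G.Adj] (s : Finset V) : ℕ :=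
  s.sup (degIn G s)

/-- The `k`-th largest degree of the subgraph of `G` induced on `s`
(the entry at position `|s| - k` of the increasingly sorted degree sequence). -/
def kthLargestDeg (G : SimpleGraph V) [DecidableRel G.Adj] (s : Finset V) (k : ℕ) : ℕ :=
  (Multiset.sort (s.val.map (degIn G s)) (· ≤ ·)).getD (s.card - k) 0

/-- `r_k` of the subgraph of `G` induced on `s`: the difference between its
maximum degree and its `k`-th largest degree. -/
def rk (G : SimpleGraph V) [DecidableRel G.Adj] (s : Finset V) (k : ℕ) : ℕ :=
  maxDegIn G s - kthLargestDeg G s k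

set_option linter.unusedSectionVars false in
lemma degIn_mono (G : SimpleGraph V) [DecidableRel G.Adj] {s s' : Finset V} (h : s' ⊆ s)
    (v : V) : degIn G s' v ≤ degIn G s v :=
  Finset.card_le_card (Finset.filter_subset_filter _ h)

/-- Fewer than `k` vertices have induced degree exceeding the `k`-th largest degree. -/
lemma card_gt_kth_lt (G : SimpleGraph V) [DecidableRel G.Adj] (s : Finset V) (k : ℕ)
    (hk : 0 < k) (hs : s.Nonempty) :
    (s.filter fun v => kthLargestDeg G s k < degIn G s v).card < k := by
  classical
  set l : List ℕ := Multiset.sort (s.val.map (degIn G s)) (· ≤ ·) with hl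
  have hlen : l.length = s.card := by
    rw [hl, Multiset.length_sort, Multiset.card_map]; rfl
  set j := s.card - k with hj
  have hjl : j < l.length := by
    rw [hlen]
    have := hs.card_pos
    omega
  set x := kthLargestDeg G s k with hx
  have hxj : l[j] = x := by
    rw [hx, kthLargestDeg, ← hl, ← hj, List.getD_eq_getElem l 0 hjl]
  have hsort : l.Pairwise (· ≤ ·) := Multiset.pairwise_sort _ _
  -- the filter cardinality equals a countP on l
  have hcard : (s.filter fun v => x < degIn G s v).card
      = l.countP (fun d => decide (x < d)) := by
    have e1 : (s.filter fun v => x < degIn G s v).card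
        = Multiset.countP (fun d => x < d) (s.val.map (degIn G s)) := by
      rw [Multiset.countP_map]
      rfl
    rw [e1, ← Multiset.sort_eq (s.val.map (degIn G s)) (· ≤ ·), ← hl, Multiset.coe_countP]
  rw [hcard]
  -- split l into take (j+1) and drop (j+1)
  have hsplit : l.countP (fun d => decide (x < d))
      = (l.take (j+1)).countP (fun d => decide (x < d))
        + (l.drop (j+1)).countP (fun d => decide (x < d)) := by
    conv_lhs => rw [← List.take_append_drop (j+1) l]
    rw [List.countP_append]
  have htake : (l.take (j+1)).countP (fun d => decide (x < d)) = 0 := by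
    rw [List.countP_eq_zero]
    intro a ha
    rw [List.mem_take_iff_getElem] at ha
    obtain ⟨i, hi, rfl⟩ := ha
    have hi' : i < l.length := lt_of_lt_of_le hi (min_le_right _ _)
    have hij : i ≤ j := by omega
    have hle : l[i] ≤ l[j] := by
      rcases Nat.lt_or_ge i j with h | h
      · exact List.pairwise_iff_getElem.mp hsort i j hi' hjl h
      · have hij' : i = j := le_antisymm hij h
        subst hij'; exact le_rfl
    simp only [decide_eq_true_eq, not_lt]
    exact hxj ▸ hle
  have hdrop : (l.drop (j+1)).countP (fun d => decide (x < d)) ≤ l.length - (j+1) := by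
    calc (l.drop (j+1)).countP _ ≤ (l.drop (j+1)).length := List.countP_le_length
    _ = l.length - (j+1) := List.length_drop
  have := hs.card_pos
  omega

/-- Main induction: repeatedly deleting high-degree vertices. -/
lemma step_lemma (G : SimpleGraph V) [DecidableRel G.Adj] (c k : ℕ) (hk : 0 < k) :
    ∀ n : ℕ, ∀ s : Finset V, maxDegIn G s ≤ n →
      ∃ s' : Finset V, ∃ t : ℕ, s' ⊆ s ∧ rk G s' k ≤ c ∧
        s.card ≤ s'.card + k * t ∧ maxDegIn G s' + t * (c + 1) ≤ maxDegIn G s := by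
  intro n
  induction n with
  | zero =>
    intro s hs
    refine ⟨s, 0, Finset.Subset.refl s, ?_, by omega, by omega⟩
    have : rk G s k ≤ maxDegIn G s := Nat.sub_le _ _
    omega
  | succ n ih =>
    intro s hs
    by_cases hr : rk G s k ≤ c
    · exact ⟨s, 0, Finset.Subset.refl s, hr, by omega, by omega⟩
    · push_neg at hr
      have hsne : s.Nonempty := by
        rcases s.eq_empty_or_nonempty with h | h
        · exfalso
          have : maxDegIn G s = 0 := by rw [h]; rfl
          have : rk G s k = 0 := by rw [rk, this]; omega
          omega
        · exact h
      set x := kthLargestDeg G s k with hx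
      set T := s.filter (fun v => x < degIn G s v) with hT
      have hTk : T.card < k := card_gt_kth_lt G s k hk hsne
      set s₁ := s \ T with hs₁
      have hsub : s₁ ⊆ s := Finset.sdiff_subset
      have hmax1 : maxDegIn G s₁ ≤ x := by
        apply Finset.sup_le
        intro v hv
        have hvs : v ∈ s := hsub hv
        have hvT : v ∉ T := (Finset.mem_sdiff.mp hv).2
        have : ¬ x < degIn G s v := by
          intro h
          exact hvT (Finset.mem_filter.mpr ⟨hvs, h⟩)
        calc degIn G s₁ v ≤ degIn G s v := degIn_mono G hsub v
        _ ≤ x := by omega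
      have hxlt : x + c + 1 ≤ maxDegIn G s := by
        rw [rk, ← hx] at hr
        omega
      have hmax1' : maxDegIn G s₁ ≤ n := by omega
      obtain ⟨s', t, hsub', hrk', hcard', hmax'⟩ := ih s₁ hmax1'
      refine ⟨s', t + 1, hsub'.trans hsub, hrk', ?_, ?_⟩
      · have hcards : s₁.card = s.card - T.card := by
          rw [hs₁]
          exact Finset.card_sdiff_of_subset (Finset.filter_subset _ _)
        have hTs : T.card ≤ s.card := Finset.card_le_card (Finset.filter_subset _ _)
        have : s.card ≤ s₁.card + k := by omega
        calc s.card ≤ s₁.card + k := this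
        _ ≤ s'.card + k * t + k := by omega
        _ = s'.card + k * (t + 1) := by ring
      · calc maxDegIn G s' + (t + 1) * (c + 1)
            = maxDegIn G s' + t * (c + 1) + (c + 1) := by ring
        _ ≤ maxDegIn G s₁ + (c + 1) := by omega
        _ ≤ x + (c + 1) := by omega
        _ ≤ maxDegIn G s := by omega

/-- Every graph `G` on `n` vertices with maximum degree `Δ` contains an induced
subgraph `H'` on at least `n - k·√Δ` vertices with `r_k(H') ≤ √Δ`. -/
theorem stmt_4 (k : ℕ) (hk : 0 < k) (G : SimpleGraph V) [DecidableRel G.Adj] :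
    ∃ s : Finset V,
      (Fintype.card V : ℝ) - k * Real.sqrt (G.maxDegree) ≤ s.card ∧
      (rk G s k : ℝ) ≤ Real.sqrt (G.maxDegree) := by
  classical
  set Δ := G.maxDegree with hΔ
  set c := Nat.sqrt Δ with hc
  have hmaxuniv : maxDegIn G (univ : Finset V) ≤ Δ := by
    apply Finset.sup_le
    intro v _
    calc degIn G univ v ≤ G.degree v := by
          rw [degIn, SimpleGraph.degree, SimpleGraph.neighborFinset]
          apply Finset.card_le_card
          intro u hu
          simp only [Finset.mem_filter] at hu
          simpa using hu.2
    _ ≤ Δ := G.degree_le_maxDegree v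
  obtain ⟨s', t, _, hrk, hcard, hmax⟩ := step_lemma G c k hk Δ univ hmaxuniv
  have htc : t ≤ c := by
    by_contra h
    push_neg at h
    have h1 : (c + 1) * (c + 1) ≤ t * (c + 1) := Nat.mul_le_mul_right _ h
    have h2 : Δ < (c + 1) * (c + 1) := by
      rw [hc]; exact Nat.lt_succ_sqrt Δ
    omega
  have hcsqrt : (c : ℝ) ≤ Real.sqrt Δ := by
    rw [Real.le_sqrt (by positivity) (by positivity)]
    have h1 : c * c ≤ Δ := Nat.sqrt_le Δ
    have h2 : (c : ℝ) * c ≤ Δ := by exact_mod_cast h1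
    nlinarith
  have hcardV : Fintype.card V ≤ s'.card + k * c := by
    have : (univ : Finset V).card = Fintype.card V := Finset.card_univ
    have hkt : k * t ≤ k * c := Nat.mul_le_mul_left _ htc
    omega
  refine ⟨s', ?_, ?_⟩
  · have h1 : (Fintype.card V : ℝ) ≤ s'.card + k * c := by exact_mod_cast hcardV
    have h2 : (k : ℝ) * c ≤ k * Real.sqrt Δ := by
      apply mul_le_mul_of_nonneg_left hcsqrt (by positivity)
    linarith
  · have h1 : (rk G s' k : ℝ) ≤ c := by exact_mod_cast hrk
    linarith
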